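/- A bipartite graph B with parts X and Y, together with a function f: V(B) → ℕ satisfying ∑_{x∈X} f(x) = ∑_{y∈Y} f(y), contains an f-factor if and only if for all subsets S ⊆ X and T ⊆ Y, e(S,T) + ∑_{y∈Y∖T} f(y) ≥ ∑_{x∈S} f(x). -/

import Mathlib

section OreAux
open Finset
set_option linter.unusedSectionVars false
set_option maxHeartbeats 1000000

variable {X Y : Type*} [Fintype X] [Fintype Y] [DecidableEq X] [DecidableEq Y]

def eST (E : Finset (X × Y)) (S : Finset X) (T : Finset Y) : ℕ :=
  (E.filter (fun e => e.1 ∈ S ∧ e.2 ∈ T)).card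

lemma eST_submod (E : Finset (X × Y)) (S₁ S₂ : Finset X) (T₁ T₂ : Finset Y) :
    eST E (S₁ ∪ S₂) (T₁ ∩ T₂) + eST E (S₁ ∩ S₂) (T₁ ∪ T₂) ≤ eST E S₁ T₁ + eST E S₂ T₂ := by
  simp only [eST, card_filter]
  rw [← Finset.sum_add_distrib, ← Finset.sum_add_distrib]
  apply Finset.sum_le_sum
  intro e _
  by_cases h1 : e.1 ∈ S₁ <;> by_cases h2 : e.1 ∈ S₂ <;> by_cases h3 : e.2 ∈ T₁ <;>
    by_cases h4 : e.2 ∈ T₂ <;> simp [h1, h2, h3, h4]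

lemma exists_factor : ∀ (n : ℕ) (E : Finset (X × Y)) (fX : X → ℕ) (fY : Y → ℕ),
    (∑ x, fX x = n) → (∑ y, fY y = n) →
    (∀ S T, ∑ x ∈ S, fX x ≤ eST E S T + ∑ y ∈ Tᶜ, fY y) →
    ∃ H : Finset (X × Y), H ⊆ E ∧ (∀ x, (H.filter (fun e => e.1 = x)).card = fX x) ∧
      (∀ y, (H.filter (fun e => e.2 = y)).card = fY y) := by
  intro n
  induction n with
  | zero =>
    intro E fX fY hX hY _
    have hx : ∀ x, fX x = 0 := fun x => (Finset.sum_eq_zero_iff.mp hX) x (mem_univ x)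
    have hy : ∀ y, fY y = 0 := fun y => (Finset.sum_eq_zero_iff.mp hY) y (mem_univ y)
    exact ⟨∅, by simp [hx, hy]⟩
  | succ n ih =>
    intro E fX fY hX hY cond
    obtain ⟨x₀, hfX0⟩ : ∃ x₀, fX x₀ ≠ 0 := by
      by_contra h; push_neg at h; simp [h] at hX
    -- the family of tight pairs avoiding x₀
    set P : Finset (Finset X × Finset Y) := univ.filter
      (fun p => x₀ ∉ p.1 ∧ ∑ x ∈ p.1, fX x = eST E p.1 p.2 + ∑ y ∈ p.2ᶜ, fY y) with hP
    have hcomb : ∀ p ∈ P, ∀ q ∈ P, (p.1 ∪ q.1, p.2 ∩ q.2) ∈ P := by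
      intro p hp q hq
      simp only [hP, mem_filter, mem_univ, true_and] at hp hq ⊢
      refine ⟨fun h => (mem_union.mp h).elim hp.1 hq.1, ?_⟩
      have h1 := cond (p.1 ∪ q.1) (p.2 ∩ q.2)
      have h2 := cond (p.1 ∩ q.1) (p.2 ∪ q.2)
      have h3 := eST_submod E p.1 q.1 p.2 q.2
      have h4 : ∑ y ∈ (p.2 ∩ q.2)ᶜ, fY y + ∑ y ∈ (p.2 ∪ q.2)ᶜ, fY y
          = ∑ y ∈ p.2ᶜ, fY y + ∑ y ∈ q.2ᶜ, fY y := by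
        rw [Finset.compl_inter, Finset.compl_union, Finset.sum_union_inter]
      have h5 : ∑ x ∈ p.1 ∪ q.1, fX x + ∑ x ∈ p.1 ∩ q.1, fX x
          = ∑ x ∈ p.1, fX x + ∑ x ∈ q.1, fX x := Finset.sum_union_inter
      have hp2 := hp.2
      have hq2 := hq.2
      omega
    have hne : P.Nonempty := by
      refine ⟨(∅, univ), ?_⟩
      simp only [hP, mem_filter, mem_univ, true_and]; simp [eST]
    have hclos : ∀ Q : Finset (Finset X × Finset Y), Q ⊆ P → Q.Nonempty →
        (Q.sup Prod.fst, Q.inf Prod.snd) ∈ P := by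
      intro Q
      induction Q using Finset.cons_induction with
      | empty => intro _ h; exact absurd rfl h.ne_empty
      | cons a s ha ihQ =>
        intro hsub _
        have haP : a ∈ P := hsub (mem_cons_self a s)
        rcases s.eq_empty_or_nonempty with rfl | hs
        · simpa using haP
        · have hsP := ihQ (fun x hx => hsub (mem_cons.mpr (Or.inr hx))) hs
          have := hcomb a haP _ hsP
          simpa [Finset.sup_cons, Finset.inf_cons] using this
    set Ss := P.sup Prod.fst with hSs
    set Ts := P.inf Prod.snd with hTs
    have hstar : (Ss, Ts) ∈ P := hclos P Finset.Subset.rfl hne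
    have hstar' := (mem_filter.mp hstar).2
    obtain ⟨hx₀Ss, htight⟩ : x₀ ∉ Ss ∧ ∑ x ∈ Ss, fX x = eST E Ss Ts + ∑ y ∈ Tsᶜ, fY y := hstar'
    -- find a neighbour y₀ of x₀ inside Ts
    have hsplit : eST E (insert x₀ Ss) Ts
        = eST E Ss Ts + (E.filter (fun e => e.1 = x₀ ∧ e.2 ∈ Ts)).card := by
      unfold eST
      have hu : (E.filter fun e => e.1 ∈ insert x₀ Ss ∧ e.2 ∈ Ts)
          = (E.filter fun e => e.1 ∈ Ss ∧ e.2 ∈ Ts) ∪ (E.filter fun e => e.1 = x₀ ∧ e.2 ∈ Ts) := by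
        rw [← Finset.filter_or]
        apply Finset.filter_congr
        intro e _
        simp only [mem_insert]
        tauto
      rw [hu, Finset.card_union_of_disjoint]
      rw [Finset.disjoint_left]
      intro e he1 he2
      simp only [mem_filter] at he1 he2
      exact hx₀Ss (he2.2.1 ▸ he1.2.1)
    have hcnt : fX x₀ ≤ (E.filter (fun e => e.1 = x₀ ∧ e.2 ∈ Ts)).card := by
      have hc := cond (insert x₀ Ss) Ts
      rw [Finset.sum_insert hx₀Ss] at hc
      omega
    obtain ⟨e₀, he₀⟩ : (E.filter (fun e => e.1 = x₀ ∧ e.2 ∈ Ts)).Nonempty := by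
      rw [← Finset.card_pos]; omega
    simp only [mem_filter] at he₀
    obtain ⟨he₀E, he₀1, he₀2⟩ := he₀
    set y₀ := e₀.2 with hy₀
    have hE₀ : (x₀, y₀) ∈ E := by rw [hy₀, ← he₀1]; exact he₀E
    have hy₀P : ∀ p ∈ P, y₀ ∈ p.2 := by
      intro p hp
      exact (Finset.inf_le hp : Ts ≤ p.2) he₀2
    have hfY0 : fY y₀ ≠ 0 := by
      intro h0
      have hmem : ((∅ : Finset X), ({y₀} : Finset Y)ᶜ) ∈ P := by
        simp only [hP, mem_filter, mem_univ, true_and]; simp [eST, h0]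
      have := hy₀P _ hmem
      simp at this
    -- the reduced instance
    set fX' := Function.update fX x₀ (fX x₀ - 1) with hfX'
    set fY' := Function.update fY y₀ (fY y₀ - 1) with hfY'
    set E' := E.erase (x₀, y₀) with hE'
    have hsX : ∑ x, fX' x + 1 = ∑ x, fX x := by
      rw [hfX', Finset.sum_update_of_mem (mem_univ x₀), Finset.sdiff_singleton_eq_erase,
        ← Finset.add_sum_erase _ fX (mem_univ x₀)]
      omega
    have hsY : ∑ y, fY' y + 1 = ∑ y, fY y := by
      rw [hfY', Finset.sum_update_of_mem (mem_univ y₀), Finset.sdiff_singleton_eq_erase,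
        ← Finset.add_sum_erase _ fY (mem_univ y₀)]
      omega
    have key : ∀ S T, ∑ x ∈ S, fX' x ≤ eST E' S T + ∑ y ∈ Tᶜ, fY' y := by
      intro S T
      have hc := cond S T
      have dX : ∑ x ∈ S, fX x = ∑ x ∈ S, fX' x + (if x₀ ∈ S then 1 else 0) := by
        by_cases h : x₀ ∈ S
        · rw [if_pos h, hfX', Finset.sum_update_of_mem h, Finset.sdiff_singleton_eq_erase,
            ← Finset.add_sum_erase _ fX h]
          omega
        · rw [if_neg h, add_zero]
          apply Finset.sum_congr rfl
          intro x hx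
          exact (Function.update_of_ne (by rintro rfl; exact h hx) _ _).symm
      have dY : ∑ y ∈ Tᶜ, fY y = ∑ y ∈ Tᶜ, fY' y + (if y₀ ∈ T then 0 else 1) := by
        by_cases h : y₀ ∈ T
        · rw [if_pos h, add_zero]
          apply Finset.sum_congr rfl
          intro y hy
          have : y ≠ y₀ := fun hh => (mem_compl.mp hy) (hh ▸ h)
          exact (Function.update_of_ne this _ _).symm
        · have h' : y₀ ∈ Tᶜ := mem_compl.mpr h
          rw [if_neg h, hfY', Finset.sum_update_of_mem h', Finset.sdiff_singleton_eq_erase,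
            ← Finset.add_sum_erase _ fY h']
          omega
      have dE : eST E S T = eST E' S T + (if x₀ ∈ S ∧ y₀ ∈ T then 1 else 0) := by
        unfold eST
        rw [hE', Finset.filter_erase]
        by_cases h : x₀ ∈ S ∧ y₀ ∈ T
        · have hm : (x₀, y₀) ∈ E.filter (fun e => e.1 ∈ S ∧ e.2 ∈ T) :=
            mem_filter.mpr ⟨hE₀, h⟩
          rw [if_pos h, Finset.card_erase_of_mem hm]
          have : 0 < (E.filter (fun e => e.1 ∈ S ∧ e.2 ∈ T)).card := Finset.card_pos.mpr ⟨_, hm⟩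
          omega
        · rw [if_neg h, add_zero, Finset.erase_eq_of_notMem]
          intro hm
          exact h (mem_filter.mp hm).2
      by_cases hxS : x₀ ∈ S <;> by_cases hyT : y₀ ∈ T <;>
        simp only [hxS, hyT, and_self, if_true, if_false, true_and, false_and, and_true,
          and_false, if_neg, not_false_iff] at dX dY dE
      · omega
      · omega
      · omega
      · -- x₀ ∉ S, y₀ ∉ T : the pair cannot be tight
        have hnt : ∑ x ∈ S, fX x ≠ eST E S T + ∑ y ∈ Tᶜ, fY y := by
          intro heq
          have hPmem : (S, T) ∈ P := by
            simp only [hP, mem_filter, mem_univ, true_and]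
            exact ⟨hxS, heq⟩
          exact hyT (hy₀P _ hPmem)
        omega
    obtain ⟨H', hH'E, hdX', hdY'⟩ := ih E' fX' fY' (by omega) (by omega) key
    have hnotmem : (x₀, y₀) ∉ H' := fun h => Finset.notMem_erase _ _ (hH'E h)
    refine ⟨insert (x₀, y₀) H', ?_, ?_, ?_⟩
    · exact Finset.insert_subset hE₀ (hH'E.trans (Finset.erase_subset _ _))
    · intro x
      rw [Finset.filter_insert]
      by_cases h : x₀ = x
      · subst h
        rw [if_pos rfl, Finset.card_insert_of_notMem (fun hm => hnotmem (mem_filter.mp hm).1),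
          hdX' x₀, hfX', Function.update_self]
        omega
      · rw [if_neg h, hdX' x, hfX', Function.update_of_ne (fun hh => h hh.symm)]
    · intro y
      rw [Finset.filter_insert]
      by_cases h : y₀ = y
      · subst h
        rw [if_pos rfl, Finset.card_insert_of_notMem (fun hm => hnotmem (mem_filter.mp hm).1),
          hdY' y₀, hfY', Function.update_self]
        omega
      · rw [if_neg h, hdY' y, hfY', Function.update_of_ne (fun hh => h hh.symm)]

lemma forward_dir (E H : Finset (X × Y)) (fX : X → ℕ) (fY : Y → ℕ)
    (hHE : H ⊆ E)
    (hdX : ∀ x : X, (H.filter (fun e => e.1 = x)).card = fX x)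
    (hdY : ∀ y : Y, (H.filter (fun e => e.2 = y)).card = fY y)
    (S : Finset X) (T : Finset Y) :
    ∑ x ∈ S, fX x ≤ (E.filter (fun e => e.1 ∈ S ∧ e.2 ∈ T)).card + ∑ y ∈ Tᶜ, fY y := by
  have h1 : ∑ x ∈ S, fX x = (H.filter (fun e => e.1 ∈ S)).card := by
    rw [Finset.card_eq_sum_card_fiberwise (f := Prod.fst) (s := H.filter (fun e => e.1 ∈ S)) (t := S)
      (fun e he => (Finset.mem_filter.mp he).2)]
    apply Finset.sum_congr rfl
    intro x hx
    rw [← hdX x, Finset.filter_filter]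
    apply congrArg
    apply Finset.filter_congr
    intro e _
    constructor
    · rintro rfl; exact ⟨hx, rfl⟩
    · exact fun h => h.2
  have h2 : (H.filter (fun e => e.1 ∈ S ∧ e.2 ∉ T)).card ≤ ∑ y ∈ Tᶜ, fY y := by
    calc (H.filter (fun e => e.1 ∈ S ∧ e.2 ∉ T)).card
        ≤ (H.filter (fun e => e.2 ∈ Tᶜ)).card := by
          apply Finset.card_le_card
          intro e he
          simp only [Finset.mem_filter, Finset.mem_compl] at he ⊢
          exact ⟨he.1, he.2.2⟩
      _ = ∑ y ∈ Tᶜ, (H.filter (fun e => e.2 = y)).card := by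
          rw [Finset.card_eq_sum_card_fiberwise (f := Prod.snd) (s := H.filter (fun e => e.2 ∈ Tᶜ)) (t := Tᶜ)
            (fun e he => (Finset.mem_filter.mp he).2)]
          apply Finset.sum_congr rfl
          intro y hy
          rw [Finset.filter_filter]
          apply congrArg
          apply Finset.filter_congr
          intro e _
          simp only [and_iff_right_iff_imp]
          rintro rfl; exact hy
      _ = ∑ y ∈ Tᶜ, fY y := by simp [hdY]
  have h3 : (H.filter (fun e => e.1 ∈ S ∧ e.2 ∈ T)).card ≤
      (E.filter (fun e => e.1 ∈ S ∧ e.2 ∈ T)).card :=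
    Finset.card_le_card (Finset.filter_subset_filter _ hHE)
  have h4 : (H.filter (fun e => e.1 ∈ S)).card =
      (H.filter (fun e => e.1 ∈ S ∧ e.2 ∈ T)).card +
      (H.filter (fun e => e.1 ∈ S ∧ e.2 ∉ T)).card := by
    rw [← Finset.filter_filter, ← Finset.filter_filter,
      Finset.card_filter_add_card_filter_not]
  omega

end OreAux

/-- Ore's theorem for bipartite `f`-factors: a bipartite graph with parts `X`, `Y`,
edge set `E`, and demands `fX`, `fY` with equal total on both sides, contains an
`f`-factor iff for all `S ⊆ X`, `T ⊆ Y` we have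
`e(S,T) + ∑_{y ∉ T} fY y ≥ ∑_{x ∈ S} fX x`. -/
theorem stmt_2 {X Y : Type*} [Fintype X] [Fintype Y] [DecidableEq X] [DecidableEq Y]
    (E : Finset (X × Y)) (fX : X → ℕ) (fY : Y → ℕ)
    (hsum : ∑ x, fX x = ∑ y, fY y) :
    (∃ H : Finset (X × Y), H ⊆ E ∧
        (∀ x : X, (H.filter (fun e => e.1 = x)).card = fX x) ∧
        (∀ y : Y, (H.filter (fun e => e.2 = y)).card = fY y)) ↔
    (∀ S : Finset X, ∀ T : Finset Y,
        ∑ x ∈ S, fX x ≤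
          (E.filter (fun e => e.1 ∈ S ∧ e.2 ∈ T)).card + ∑ y ∈ Tᶜ, fY y) := by
  constructor
  · rintro ⟨H, hHE, hdX, hdY⟩ S T
    exact forward_dir E H fX fY hHE hdX hdY S T
  · intro cond
    exact exists_factor (∑ x, fX x) E fX fY rfl hsum.symm cond
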